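/- In the information system with universe ℝ≥0 and attributes {p_i} ∪ {q_i} (p_i(a)=1 iff a=i; q_i(a)=1 iff a ≥ i + 1/2), for any i₁ < i₂ < … < i_m in ℕ, knowing the values of suitably chosen at most n attributes q_j determines the values of all but at most one of the attributes p_{i₁},…,p_{i_m}: precisely, if for consecutive indices i_t < i_{t+1} there is a known q_j with i_t ≤ j < i_{t+1}, then for any a ∈ ℝ≥0, the values q_j(a) determine p_{i_t}(a) for all but at most one index t. -/
import Mathlib


open scoped Classical

/-- The attribute `p i` on the universe `ℝ≥0`: `p i a = 1` iff `a = i`. -/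
noncomputable def p (i : ℕ) (a : NNReal) : Bool := decide (a = (i : NNReal))

/-- The attribute `q j` on the universe `ℝ≥0`: `q j a = 1` iff `a ≥ j + 1/2`. -/
noncomputable def q (j : ℕ) (a : NNReal) : Bool := decide ((j : NNReal) + 1 / 2 ≤ a)

lemma key_aux (m : ℕ) (i : Fin m → ℕ) (hmono : StrictMono i)
    (J : Finset ℕ)
    (hJ : ∀ t : Fin m, ∀ ht : (t : ℕ) + 1 < m,
      ∃ j ∈ J, i t ≤ j ∧ j < i ⟨(t : ℕ) + 1, ht⟩)
    (a a' : NNReal) (hq : ∀ j ∈ J, q j a = q j a')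
    (t : Fin m) (ha : a = (i t : NNReal))
    (s : Fin m) (hs : s ≠ t) : a' ≠ ((i s : ℕ) : NNReal) := by
  rcases lt_or_gt_of_ne (fun h : s = t => hs h) with hlt | hgt
  · -- s < t : use j in [i s, i (s+1))
    have hs1 : (s : ℕ) + 1 < m := lt_of_le_of_lt (Nat.succ_le_of_lt hlt) t.isLt
    obtain ⟨j, hjJ, hj1, hj2⟩ := hJ s hs1
    have hle : i ⟨(s : ℕ) + 1, hs1⟩ ≤ i t := by
      apply hmono.monotone
      exact Nat.succ_le_of_lt hlt
    have hjlt : j < i t := lt_of_lt_of_le hj2 hle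
    have hqa : q j a = true := by
      simp only [q, decide_eq_true_eq, ha]
      have : (j : NNReal) + 1 ≤ (i t : NNReal) := by
        exact_mod_cast Nat.succ_le_of_lt hjlt
      have h2 : (1:NNReal)/2 ≤ 1 := by norm_num
      calc (j : NNReal) + 1/2 ≤ (j : NNReal) + 1 := by gcongr
        _ ≤ _ := this
    have hqa' : q j a' = true := (hq j hjJ) ▸ hqa
    have : (j : NNReal) + 1/2 ≤ a' := by simpa [q] using hqa'
    intro h
    rw [h] at this
    have hij : ((i s : ℕ) : NNReal) ≤ (j : NNReal) := by exact_mod_cast hj1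
    have : (j : NNReal) + 1/2 ≤ (j : NNReal) := le_trans this hij
    simp at this
  · -- s > t
    have ht1 : (t : ℕ) + 1 < m := lt_of_le_of_lt (Nat.succ_le_of_lt hgt) s.isLt
    obtain ⟨j, hjJ, hj1, hj2⟩ := hJ t ht1
    have hqa : q j a = false := by
      simp only [q, decide_eq_false_iff_not, ha, not_le]
      have h1 : ((i t : ℕ) : NNReal) ≤ (j : NNReal) := by exact_mod_cast hj1
      have : (0:NNReal) < 1/2 := by norm_num
      calc ((i t : ℕ) : NNReal) ≤ (j : NNReal) := h1
        _ < (j : NNReal) + 1/2 := by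
            exact lt_add_of_pos_right _ this
    have hqa' : q j a' = false := (hq j hjJ) ▸ hqa
    have hlt' : a' < (j : NNReal) + 1/2 := by
      simp only [q, decide_eq_false_iff_not, not_le] at hqa'
      exact hqa'
    intro h
    have hle : i ⟨(t : ℕ) + 1, ht1⟩ ≤ i s := hmono.monotone (Nat.succ_le_of_lt hgt)
    have hjs : j + 1 ≤ i s := le_trans (Nat.succ_le_of_lt hj2) hle
    have hcast : (j : NNReal) + 1 ≤ ((i s : ℕ) : NNReal) := by exact_mod_cast hjs
    rw [h] at hlt'
    have : ((i s : ℕ) : NNReal) < (j : NNReal) + 1 := by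
      calc ((i s : ℕ) : NNReal) < (j : NNReal) + 1/2 := hlt'
        _ ≤ (j : NNReal) + 1 := by gcongr; norm_num
    exact absurd hcast (not_le.mpr this)

/-- If for each pair of consecutive indices `i t < i (t+1)` the set `J` of known attributes
`q j` contains some `j` with `i t ≤ j < i (t+1)`, then the values `q j (a)` for `j ∈ J`
determine the values `p (i t) (a)` for all but at most one index `t`: any two objects with
the same known `q`-values agree on `p (i t)` for all `t` except possibly one. -/
theorem stmt_16 (m : ℕ) (hm : 1 ≤ m) (i : Fin m → ℕ) (hmono : StrictMono i)
    (J : Finset ℕ)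
    (hJ : ∀ t : Fin m, ∀ ht : (t : ℕ) + 1 < m,
      ∃ j ∈ J, i t ≤ j ∧ j < i ⟨(t : ℕ) + 1, ht⟩) :
    ∀ a a' : NNReal, (∀ j ∈ J, q j a = q j a') →
      ∃ t₀ : Fin m, ∀ t : Fin m, t ≠ t₀ → p (i t) a = p (i t) a' := by
  intro a a' hq
  by_cases hbad : ∃ t : Fin m, p (i t) a ≠ p (i t) a'
  · obtain ⟨t, ht⟩ := hbad
    refine ⟨t, fun s hs => ?_⟩
    -- p (i t) a ≠ p (i t) a' means exactly one of a = i t, a' = i t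
    simp only [p, ne_eq, decide_eq_decide] at ht
    by_cases hat : a = ((i t : ℕ) : NNReal)
    · have ha's : a' ≠ ((i s : ℕ) : NNReal) :=
        key_aux m i hmono J hJ a a' hq t hat s hs
      have has : a ≠ ((i s : ℕ) : NNReal) := by
        rw [hat]; intro h; exact hs ((hmono.injective (by exact_mod_cast h)).symm)
      simp [p, has, ha's]
    · have ha't : a' = ((i t : ℕ) : NNReal) := by
        by_contra h
        exact ht ⟨fun h1 => absurd h1 hat, fun h2 => absurd h2 h⟩ |>.elim
      have has : a ≠ ((i s : ℕ) : NNReal) :=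
        key_aux m i hmono J hJ a' a
          (fun j hj => (hq j hj).symm) t ha't s hs
      have ha's : a' ≠ ((i s : ℕ) : NNReal) := by
        rw [ha't]; intro h; exact hs ((hmono.injective (by exact_mod_cast h)).symm)
      simp [p, has, ha's]
  · push_neg at hbad
    exact ⟨⟨0, hm⟩, fun t _ => hbad t⟩
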